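/- Large time asymptotics of the anisotropic heat flow: if $u(t,\cdot)=g_{P(t)}*f$ with $P(t)=(G^{-1}+(t-1)A^{-1})^{-1}$, $A\le G$ positive definite, and $f\in L^1(\mathbb{R}^n)$ nonnegative, then for every $x\in\mathbb{R}^n$, $\lim_{t\to\infty} t^{n/2}u(t,\sqrt{t}\,x) = \big(\int_{\mathbb{R}^n} f\big)\, g_A(x)$. -/

import Mathlib

open Matrix MeasureTheory Filter Topology

set_option maxHeartbeats 2000000 in
/-- Large time asymptotics of the anisotropic heat flow. -/
theorem stmt8 (n : ℕ) (A G : Matrix (Fin n) (Fin n) ℝ) (hA : A.PosDef) (hG : G.PosDef)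
    (hAG : (G - A).PosSemidef)
    (f : (Fin n → ℝ) → ℝ) (hf : Integrable f) (hpos : ∀ y, 0 ≤ f y)
    (P : ℝ → Matrix (Fin n) (Fin n) ℝ)
    (hP : ∀ t, P t = (G⁻¹ + (t - 1) • A⁻¹)⁻¹)
    (u : ℝ → (Fin n → ℝ) → ℝ)
    (hu : ∀ t x, u t x = ∫ y, (P t).det ^ ((1:ℝ)/2) *
        Real.exp (-Real.pi * ((x - y) ⬝ᵥ ((P t).mulVec (x - y)))) * f y)
    (x : Fin n → ℝ) :
    Tendsto (fun t : ℝ => t ^ ((n : ℝ)/2) * u t (Real.sqrt t • x)) atTop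
      (nhds ((∫ y, f y) *
        (A.det ^ ((1:ℝ)/2) * Real.exp (-Real.pi * (x ⬝ᵥ (A.mulVec x)))))) := by
  have hAi : (A⁻¹).PosDef := hA.inv
  have hGi : (G⁻¹).PosDef := hG.inv
  -- smul of possemidef
  have smulPSD : ∀ (c : ℝ) (M : Matrix (Fin n) (Fin n) ℝ), 0 ≤ c → M.PosSemidef →
      (c • M).PosSemidef := by
    intro c M hc hM
    refine .of_dotProduct_mulVec_nonneg ?_ (fun v => ?_)
    · unfold Matrix.IsHermitian
      rw [conjTranspose_smul, hM.1.eq]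
      simp
    · rw [smul_mulVec, dotProduct_smul, smul_eq_mul]
      exact mul_nonneg hc (hM.dotProduct_mulVec_nonneg v)
  -- R t is the inner matrix, posdef for t ≥ 1
  have hR : ∀ t : ℝ, 1 ≤ t → (G⁻¹ + (t - 1) • A⁻¹).PosDef := by
    intro t ht
    exact hGi.add_posSemidef (smulPSD _ _ (by linarith) hAi.posSemidef)
  have hPt : ∀ t : ℝ, 1 ≤ t → (P t).PosDef := by
    intro t ht; rw [hP]; exact (hR t ht).inv
  -- the rescaled matrices t • P t converge to A
  set Q : ℝ → Matrix (Fin n) (Fin n) ℝ := fun t => t⁻¹ • G⁻¹ + (1 - t⁻¹) • A⁻¹ with hQdef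
  have hQ : Tendsto Q atTop (𝓝 (A⁻¹)) := by
    have h1 : Tendsto (fun t : ℝ => t⁻¹) atTop (𝓝 0) := tendsto_inv_atTop_zero
    have h2 : Tendsto (fun t : ℝ => (1 : ℝ) - t⁻¹) atTop (𝓝 1) := by
      simpa using (tendsto_const_nhds (x := (1:ℝ)) (f := (atTop : Filter ℝ))).sub h1
    have := (h1.smul_const (G⁻¹)).add (h2.smul_const (A⁻¹))
    simpa using this
  have hQinv : Tendsto (fun t => (Q t)⁻¹) atTop (𝓝 A) := by
    have hdet : (A⁻¹).det ≠ 0 := hAi.det_pos.ne'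
    have hcont : ContinuousAt Inv.inv (A⁻¹) :=
      continuousAt_matrix_inv _ (NormedRing.inverse_continuousAt (Units.mk0 _ hdet))
    have := hcont.tendsto.comp hQ
    rwa [Matrix.nonsing_inv_nonsing_inv _ (isUnit_iff_ne_zero.mpr hA.det_pos.ne')] at this
  have hMev : ∀ᶠ t in atTop, (Q t)⁻¹ = t • P t := by
    filter_upwards [eventually_ge_atTop (1:ℝ)] with t ht
    have ht0 : t ≠ 0 := by positivity
    have hQt : Q t = t⁻¹ • (G⁻¹ + (t - 1) • A⁻¹) := by
      rw [hQdef]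
      simp only [smul_add, smul_smul]
      congr 2
      field_simp
    rw [hQt]
    apply Matrix.inv_eq_left_inv
    rw [hP, Matrix.smul_mul, Matrix.mul_smul,
      Matrix.nonsing_inv_mul _ (isUnit_iff_ne_zero.mpr (hR t ht).det_pos.ne'), smul_smul,
      mul_inv_cancel₀ ht0, one_smul]
  have hM : Tendsto (fun t => t • P t) atTop (𝓝 A) := hQinv.congr' hMev
  -- determinant convergence
  have hdetM : Tendsto (fun t => (t • P t).det) atTop (𝓝 A.det) :=
    ((continuous_id.matrix_det).tendsto A).comp hM
  -- coefficient convergence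
  have hcoef : Tendsto (fun t => t ^ ((n:ℝ)/2) * (P t).det ^ ((1:ℝ)/2)) atTop
      (𝓝 (A.det ^ ((1:ℝ)/2))) := by
    have hrpow : ContinuousAt (fun z : ℝ => z ^ ((1:ℝ)/2)) A.det :=
      Real.continuousAt_rpow_const _ _ (Or.inl hA.det_pos.ne')
    have h1 : Tendsto (fun t => (t • P t).det ^ ((1:ℝ)/2)) atTop (𝓝 (A.det ^ ((1:ℝ)/2))) :=
      hrpow.tendsto.comp hdetM
    refine h1.congr' ?_
    filter_upwards [eventually_ge_atTop (1:ℝ)] with t ht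
    have ht0 : (0:ℝ) < t := by linarith
    rw [Matrix.det_smul, Fintype.card_fin, Real.mul_rpow (by positivity) (hPt t ht).det_pos.le,
      ← Real.rpow_natCast t n, ← Real.rpow_mul ht0.le, mul_one_div]
  -- pointwise convergence of the quadratic form
  have hvlim : ∀ y : Fin n → ℝ, Tendsto (fun t : ℝ => x - (Real.sqrt t)⁻¹ • y) atTop (𝓝 x) := by
    intro y
    have h1 : Tendsto (fun t : ℝ => (Real.sqrt t)⁻¹) atTop (𝓝 0) := by
      have : Tendsto (fun t : ℝ => Real.sqrt t⁻¹) atTop (𝓝 (Real.sqrt 0)) :=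
        (Real.continuous_sqrt.tendsto 0).comp tendsto_inv_atTop_zero
      simp only [Real.sqrt_zero] at this
      refine this.congr fun t => ?_
      rw [Real.sqrt_inv]
    have := (tendsto_const_nhds (x := x) (f := (atTop : Filter ℝ))).sub (h1.smul_const y)
    simpa using this
  have hqform : ∀ y : Fin n → ℝ,
      Tendsto (fun t : ℝ => (x - (Real.sqrt t)⁻¹ • y) ⬝ᵥ
          ((t • P t).mulVec (x - (Real.sqrt t)⁻¹ • y))) atTop (𝓝 (x ⬝ᵥ A.mulVec x)) := by
    intro y
    have hcont : Continuous fun p : Matrix (Fin n) (Fin n) ℝ × (Fin n → ℝ) =>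
        p.2 ⬝ᵥ p.1.mulVec p.2 :=
      (continuous_snd).dotProduct ((continuous_fst).matrix_mulVec continuous_snd)
    exact (hcont.tendsto (A, x)).comp (hM.prodMk_nhds (hvlim y))
  -- rewrite the quadratic form
  have hqeq : ∀ t : ℝ, 1 ≤ t → ∀ y : Fin n → ℝ,
      (Real.sqrt t • x - y) ⬝ᵥ ((P t).mulVec (Real.sqrt t • x - y)) =
      (x - (Real.sqrt t)⁻¹ • y) ⬝ᵥ ((t • P t).mulVec (x - (Real.sqrt t)⁻¹ • y)) := by
    intro t ht y
    have ht0 : (0:ℝ) ≤ t := by linarith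
    have hs : Real.sqrt t ≠ 0 := ne_of_gt (Real.sqrt_pos.mpr (by linarith))
    have hw : Real.sqrt t • x - y = Real.sqrt t • (x - (Real.sqrt t)⁻¹ • y) := by
      rw [smul_sub, smul_smul, mul_inv_cancel₀ hs, one_smul]
    rw [hw, Matrix.mulVec_smul, smul_dotProduct, dotProduct_smul, smul_eq_mul, smul_eq_mul,
      ← mul_assoc, Real.mul_self_sqrt ht0, Matrix.smul_mulVec, dotProduct_smul, smul_eq_mul]
  -- the integrand and its properties
  set c : ℝ := A.det ^ ((1:ℝ)/2) * Real.exp (-Real.pi * (x ⬝ᵥ A.mulVec x)) with hc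
  set F : ℝ → (Fin n → ℝ) → ℝ := fun t y => t ^ ((n:ℝ)/2) * ((P t).det ^ ((1:ℝ)/2) *
      Real.exp (-Real.pi * ((Real.sqrt t • x - y) ⬝ᵥ ((P t).mulVec (Real.sqrt t • x - y)))) * f y)
    with hF
  have key : Tendsto (fun t => ∫ y, F t y) atTop (𝓝 (∫ y, c * f y)) := by
    apply tendsto_integral_filter_of_dominated_convergence
      (bound := fun y => (A.det ^ ((1:ℝ)/2) + 1) * f y)
    · filter_upwards with t
      have hcont : Continuous fun y : Fin n → ℝ => t ^ ((n:ℝ)/2) * ((P t).det ^ ((1:ℝ)/2) *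
          Real.exp (-Real.pi *
            ((Real.sqrt t • x - y) ⬝ᵥ ((P t).mulVec (Real.sqrt t • x - y))))) := by
        have hw : Continuous fun y : Fin n → ℝ => Real.sqrt t • x - y :=
          continuous_const.sub continuous_id
        exact continuous_const.mul (continuous_const.mul (Real.continuous_exp.comp
          (continuous_const.mul (hw.dotProduct (continuous_const.matrix_mulVec hw)))))
      have := (hcont.aestronglyMeasurable (μ := (volume : Measure (Fin n → ℝ)))).mul hf.1
      refine this.congr (Eventually.of_forall fun y => ?_)
      simp only [Pi.mul_apply]
      ring
    · filter_upwards [eventually_ge_atTop (1:ℝ),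
        hcoef.eventually (gt_mem_nhds (lt_add_one (A.det ^ ((1:ℝ)/2))))] with t ht hlt
      refine Eventually.of_forall fun y => ?_
      have hq0 : 0 ≤ (Real.sqrt t • x - y) ⬝ᵥ ((P t).mulVec (Real.sqrt t • x - y)) := by
        have := (hPt t ht).posSemidef.dotProduct_mulVec_nonneg (Real.sqrt t • x - y)
        simpa using this
      have hexp1 : Real.exp (-Real.pi *
          ((Real.sqrt t • x - y) ⬝ᵥ ((P t).mulVec (Real.sqrt t • x - y)))) ≤ 1 := by
        rw [Real.exp_le_one_iff]
        have := Real.pi_pos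
        nlinarith
      have h1 : (0:ℝ) ≤ t ^ ((n:ℝ)/2) := Real.rpow_nonneg (by linarith) _
      have h2 : (0:ℝ) ≤ (P t).det ^ ((1:ℝ)/2) := Real.rpow_nonneg (hPt t ht).det_pos.le _
      have hFnn : 0 ≤ F t y := by
        apply mul_nonneg h1
        exact mul_nonneg (mul_nonneg h2 (Real.exp_pos _).le) (hpos y)
      rw [Real.norm_eq_abs, abs_of_nonneg hFnn]
      have hstep : F t y ≤ (t ^ ((n:ℝ)/2) * (P t).det ^ ((1:ℝ)/2)) * f y := by
        have heq : F t y = (t ^ ((n:ℝ)/2) * (P t).det ^ ((1:ℝ)/2)) * (Real.exp (-Real.pi *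
            ((Real.sqrt t • x - y) ⬝ᵥ ((P t).mulVec (Real.sqrt t • x - y)))) * f y) := by
          rw [hF]; ring
        rw [heq]
        refine mul_le_mul_of_nonneg_left ?_ (mul_nonneg h1 h2)
        exact mul_le_of_le_one_left (hpos y) hexp1
      refine hstep.trans ?_
      exact mul_le_mul_of_nonneg_right hlt.le (hpos y)
    · exact (hf.const_mul _)
    · refine Eventually.of_forall fun y => ?_
      have hexp : Tendsto (fun t : ℝ => Real.exp (-Real.pi *
          ((x - (Real.sqrt t)⁻¹ • y) ⬝ᵥ ((t • P t).mulVec (x - (Real.sqrt t)⁻¹ • y)))))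
          atTop (𝓝 (Real.exp (-Real.pi * (x ⬝ᵥ A.mulVec x)))) :=
        (Real.continuous_exp.tendsto _).comp ((hqform y).const_mul _)
      have := (hcoef.mul hexp).mul_const (f y)
      refine this.congr' ?_
      filter_upwards [eventually_ge_atTop (1:ℝ)] with t ht
      rw [hF]
      simp only
      rw [hqeq t ht y]
      ring
  -- conclude
  have hLHS : (fun t : ℝ => t ^ ((n:ℝ)/2) * u t (Real.sqrt t • x)) =ᶠ[atTop]
      (fun t => ∫ y, F t y) := by
    filter_upwards with t
    rw [hu, ← integral_const_mul]
  have hR2 : (∫ y, f y) * c = ∫ y, c * f y := by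
    rw [integral_const_mul, mul_comm]
  rw [hR2]
  exact key.congr' hLHS.symm
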